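/- For every u ∈ V and v ∈ H, the series ∑ₙ Bₙ(u, v)·v̄ₙ converges absolutely and Re ∑ₙ Bₙ(u, v)·v̄ₙ = 0, i.e. (B(u, v), v) = 0 in the real inner product of H. -/

import Mathlib

open Complex MeasureTheory Filter Topology

noncomputable section

/-- The wave numbers `kₙ = k₀ · 2ⁿ`. -/
def kk (k₀ : ℝ) (n : ℕ) : ℝ := k₀ * 2 ^ n

/-- The GOY nonlinearity `B(u,v)ₙ`; sequences are indexed from `1`, with the
convention that the `0`-th entry (playing the role of `u₀ = u₋₁ = 0`) vanishes. -/
def goyB (k₀ : ℝ) (u v : ℕ → ℂ) (n : ℕ) : ℂ :=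
  if n = 0 then 0 else
    Complex.I * (kk k₀ n : ℂ) *
      ((1 / 4) * (starRingEnd ℂ) (u (n + 1)) * (starRingEnd ℂ) (v (n - 1))
        - (1 / 2) * ((starRingEnd ℂ) (u (n + 1)) * (starRingEnd ℂ) (v (n + 2))
            + (starRingEnd ℂ) (u (n + 2)) * (starRingEnd ℂ) (v (n + 1)))
        + (1 / 8) * (starRingEnd ℂ) (u (n - 1)) * (starRingEnd ℂ) (v (n - 2)))

/-- Membership in `H`: square summability. -/
def memH (u : ℕ → ℂ) : Prop := Summable fun n => ‖u n‖ ^ 2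

/-- Membership in `V`. -/
def memV (k₀ : ℝ) (u : ℕ → ℂ) : Prop := Summable fun n => kk k₀ n ^ 2 * ‖u n‖ ^ 2

/-- `|u|² = ∑ₙ |uₙ|²`. -/
def hnormSq (u : ℕ → ℂ) : ℝ := ∑' n, ‖u n‖ ^ 2

/-- `‖u‖² = ∑ₙ kₙ²|uₙ|²`. -/
def vnormSq (k₀ : ℝ) (u : ℕ → ℂ) : ℝ := ∑' n, kk k₀ n ^ 2 * ‖u n‖ ^ 2

/-- `‖u‖_{V'}² = ∑ₙ kₙ⁻²|uₙ|²`. -/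
def vdualSq (k₀ : ℝ) (u : ℕ → ℂ) : ℝ := ∑' n, ‖u n‖ ^ 2 / kk k₀ n ^ 2

end

noncomputable section Stmt6Aux

/-- First monomial term of `Bₙ(u,v)·v̄ₙ`. -/
def tA (k₀ : ℝ) (u v : ℕ → ℂ) (n : ℕ) : ℂ :=
  Complex.I * (kk k₀ n : ℂ) * (1 / 4) * (starRingEnd ℂ) (u (n + 1)) *
    (starRingEnd ℂ) (v (n - 1)) * (starRingEnd ℂ) (v n)

/-- Second monomial term of `Bₙ(u,v)·v̄ₙ`. -/
def tB (k₀ : ℝ) (u v : ℕ → ℂ) (n : ℕ) : ℂ :=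
  Complex.I * (kk k₀ n : ℂ) * (-(1 / 2)) * (starRingEnd ℂ) (u (n + 1)) *
    (starRingEnd ℂ) (v (n + 2)) * (starRingEnd ℂ) (v n)

/-- Third monomial term of `Bₙ(u,v)·v̄ₙ`. -/
def tC (k₀ : ℝ) (u v : ℕ → ℂ) (n : ℕ) : ℂ :=
  Complex.I * (kk k₀ n : ℂ) * (-(1 / 2)) * (starRingEnd ℂ) (u (n + 2)) *
    (starRingEnd ℂ) (v (n + 1)) * (starRingEnd ℂ) (v n)

/-- Fourth monomial term of `Bₙ(u,v)·v̄ₙ`. -/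
def tD (k₀ : ℝ) (u v : ℕ → ℂ) (n : ℕ) : ℂ :=
  Complex.I * (kk k₀ n : ℂ) * (1 / 8) * (starRingEnd ℂ) (u (n - 1)) *
    (starRingEnd ℂ) (v (n - 2)) * (starRingEnd ℂ) (v n)

lemma key_bound (A b c M : ℝ) (hA0 : 0 ≤ A) (hA : A ≤ M) (hb : 0 ≤ b) (hc : 0 ≤ c) :
    A * (b * c) ≤ M / 2 * (b ^ 2 + c ^ 2) := by
  nlinarith [sq_nonneg (b - c), mul_nonneg hb hc,
    mul_le_mul_of_nonneg_right hA (mul_nonneg hb hc)]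

end Stmt6Aux

set_option maxHeartbeats 1000000 in
/-- For `u ∈ V`, `v ∈ H`, the series `∑ₙ Bₙ(u,v)·v̄ₙ` converges
absolutely and `Re ∑ₙ Bₙ(u,v)·v̄ₙ = 0`, i.e. `(B(u,v), v) = 0`. -/
theorem stmt_6 (k₀ : ℝ) (hk₀ : 0 < k₀) (u v : ℕ → ℂ) (hu0 : u 0 = 0)
    (hv0 : v 0 = 0) (hu : memV k₀ u) (hv : memH v) :
    Summable (fun n => ‖goyB k₀ u v n * (starRingEnd ℂ) (v n)‖) ∧
    (∑' n, goyB k₀ u v n * (starRingEnd ℂ) (v n)).re = 0 := by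
  have hkkpos : ∀ n, 0 < kk k₀ n := fun n => by
    have : (0:ℝ) < 2 ^ n := by positivity
    exact mul_pos hk₀ this
  set Mu : ℝ := Real.sqrt (vnormSq k₀ u) with hMudef
  have hMu0 : 0 ≤ Mu := Real.sqrt_nonneg _
  have hvnn : 0 ≤ vnormSq k₀ u := tsum_nonneg (fun n => by positivity)
  have hMu : ∀ m, kk k₀ m * ‖u m‖ ≤ Mu := by
    intro m
    rw [hMudef, Real.le_sqrt (mul_nonneg (hkkpos m).le (norm_nonneg _)) hvnn]
    have h1 : kk k₀ m ^ 2 * ‖u m‖ ^ 2 ≤ vnormSq k₀ u :=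
      Summable.le_tsum hu m (fun i _ => by positivity)
    nlinarith
  -- double step for kk
  have hkk2 : ∀ n, kk k₀ (n + 1) = 2 * kk k₀ n := by
    intro n; simp [kk, pow_succ]; ring
  -- norms of the four terms
  have hnA : ∀ n, ‖tA k₀ u v n‖ =
      kk k₀ n * (1 / 4) * ‖u (n + 1)‖ * (‖v (n - 1)‖ * ‖v n‖) := by
    intro n
    simp [tA, norm_mul, Complex.norm_real, RCLike.norm_conj,
      abs_of_pos (hkkpos n)]
    ring
  have hnB : ∀ n, ‖tB k₀ u v n‖ =
      kk k₀ n * (1 / 2) * ‖u (n + 1)‖ * (‖v (n + 2)‖ * ‖v n‖) := by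
    intro n
    simp [tB, norm_mul, Complex.norm_real, RCLike.norm_conj,
      abs_of_pos (hkkpos n)]
    ring
  have hnC : ∀ n, ‖tC k₀ u v n‖ =
      kk k₀ n * (1 / 2) * ‖u (n + 2)‖ * (‖v (n + 1)‖ * ‖v n‖) := by
    intro n
    simp [tC, norm_mul, Complex.norm_real, RCLike.norm_conj,
      abs_of_pos (hkkpos n)]
    ring
  have hnD : ∀ n, ‖tD k₀ u v n‖ =
      kk k₀ n * (1 / 8) * ‖u (n - 1)‖ * (‖v (n - 2)‖ * ‖v n‖) := by
    intro n
    simp [tD, norm_mul, Complex.norm_real, RCLike.norm_conj,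
      abs_of_pos (hkkpos n)]
    ring
  -- coefficient bounds
  have hcoefA : ∀ n, kk k₀ n * (1 / 4) * ‖u (n + 1)‖ ≤ Mu := by
    intro n
    have := hMu (n + 1)
    have h2 := hkk2 n
    have := norm_nonneg (u (n + 1))
    nlinarith [(hkkpos n).le]
  have hcoefB : ∀ n, kk k₀ n * (1 / 2) * ‖u (n + 1)‖ ≤ Mu := by
    intro n
    have := hMu (n + 1)
    have h2 := hkk2 n
    have := norm_nonneg (u (n + 1))
    nlinarith [(hkkpos n).le]
  have hcoefC : ∀ n, kk k₀ n * (1 / 2) * ‖u (n + 2)‖ ≤ Mu := by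
    intro n
    have := hMu (n + 2)
    have h2 := hkk2 (n + 1)
    have h3 := hkk2 n
    have := norm_nonneg (u (n + 2))
    nlinarith [(hkkpos n).le]
  have hcoefD : ∀ n, kk k₀ n * (1 / 8) * ‖u (n - 1)‖ ≤ Mu := by
    intro n
    match n with
    | 0 => simpa [hu0] using hMu0
    | Nat.succ m =>
      have := hMu m
      have h2 := hkk2 m
      have := norm_nonneg (u m)
      show kk k₀ (m + 1) * (1 / 8) * ‖u m‖ ≤ Mu
      nlinarith [(hkkpos m).le]
  -- summability of shifted squares of v
  have hv1 : Summable (fun n => ‖v (n - 1)‖ ^ 2) :=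
    (summable_nat_add_iff 1).mp (by simpa [memH] using hv)
  have hv2 : Summable (fun n => ‖v (n - 2)‖ ^ 2) :=
    (summable_nat_add_iff 2).mp (by simpa [memH] using hv)
  have hvp : ∀ k : ℕ, Summable (fun n => ‖v (n + k)‖ ^ 2) :=
    fun k => (summable_nat_add_iff k).mpr hv
  -- summability of each term in norm
  have hsA : Summable (fun n => ‖tA k₀ u v n‖) := by
    apply Summable.of_nonneg_of_le (fun n => norm_nonneg _)
      (fun n => ?_) ((hv1.add hv).mul_left (Mu / 2))
    rw [hnA n]
    exact key_bound _ _ _ _ (mul_nonneg (mul_nonneg (hkkpos n).le (by norm_num)) (norm_nonneg _)) (hcoefA n) (norm_nonneg _) (norm_nonneg _)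
  have hsB : Summable (fun n => ‖tB k₀ u v n‖) := by
    apply Summable.of_nonneg_of_le (fun n => norm_nonneg _)
      (fun n => ?_) (((hvp 2).add hv).mul_left (Mu / 2))
    rw [hnB n]
    exact key_bound _ _ _ _ (mul_nonneg (mul_nonneg (hkkpos n).le (by norm_num)) (norm_nonneg _)) (hcoefB n) (norm_nonneg _) (norm_nonneg _)
  have hsC : Summable (fun n => ‖tC k₀ u v n‖) := by
    apply Summable.of_nonneg_of_le (fun n => norm_nonneg _)
      (fun n => ?_) (((hvp 1).add hv).mul_left (Mu / 2))
    rw [hnC n]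
    exact key_bound _ _ _ _ (mul_nonneg (mul_nonneg (hkkpos n).le (by norm_num)) (norm_nonneg _)) (hcoefC n) (norm_nonneg _) (norm_nonneg _)
  have hsD : Summable (fun n => ‖tD k₀ u v n‖) := by
    apply Summable.of_nonneg_of_le (fun n => norm_nonneg _)
      (fun n => ?_) ((hv2.add hv).mul_left (Mu / 2))
    rw [hnD n]
    exact key_bound _ _ _ _ (mul_nonneg (mul_nonneg (hkkpos n).le (by norm_num)) (norm_nonneg _)) (hcoefD n) (norm_nonneg _) (norm_nonneg _)
  have sA : Summable (tA k₀ u v) := Summable.of_norm hsA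
  have sB : Summable (tB k₀ u v) := Summable.of_norm hsB
  have sC : Summable (tC k₀ u v) := Summable.of_norm hsC
  have sD : Summable (tD k₀ u v) := Summable.of_norm hsD
  -- pointwise decomposition
  have hdecomp : ∀ n, goyB k₀ u v n * (starRingEnd ℂ) (v n) =
      tA k₀ u v n + tB k₀ u v n + tC k₀ u v n + tD k₀ u v n := by
    intro n
    match n with
    | 0 => simp [goyB, tA, tB, tC, tD, hu0, hv0]
    | Nat.succ m =>
      have h2 : m + 1 - 2 = m - 1 := by omega
      simp only [goyB, tA, tB, tC, tD, if_neg (Nat.succ_ne_zero m),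
        Nat.add_sub_cancel, h2]
      ring
  -- telescoping identities
  have hAC : ∀ n, tA k₀ u v (n + 1) = - tC k₀ u v n := by
    intro n
    simp only [tA, tC, Nat.add_sub_cancel, hkk2 n]
    push_cast
    ring
  have hDB : ∀ n, tD k₀ u v (n + 1 + 1) = - tB k₀ u v n := by
    intro n
    have h1 : n + 1 + 1 - 1 = n + 1 := by omega
    have h2 : n + 1 + 1 - 2 = n := by omega
    simp only [tD, tB, h1, h2, hkk2 (n + 1), hkk2 n]
    push_cast
    ring
  have hA0 : tA k₀ u v 0 = 0 := by simp [tA, hv0]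
  have hD0 : tD k₀ u v 0 = 0 := by simp [tD, hu0]
  have hD1 : tD k₀ u v 1 = 0 := by simp [tD, hu0]
  constructor
  · apply Summable.of_nonneg_of_le (fun n => norm_nonneg _) (fun n => ?_)
      (((hsA.add hsB).add hsC).add hsD)
    rw [hdecomp n]
    calc ‖tA k₀ u v n + tB k₀ u v n + tC k₀ u v n + tD k₀ u v n‖
        ≤ ‖tA k₀ u v n + tB k₀ u v n + tC k₀ u v n‖ + ‖tD k₀ u v n‖ := norm_add_le _ _
      _ ≤ ‖tA k₀ u v n + tB k₀ u v n‖ + ‖tC k₀ u v n‖ + ‖tD k₀ u v n‖ := by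
          gcongr; exact norm_add_le _ _
      _ ≤ ‖tA k₀ u v n‖ + ‖tB k₀ u v n‖ + ‖tC k₀ u v n‖ + ‖tD k₀ u v n‖ := by
          gcongr; exact norm_add_le _ _
  · have htsum : (∑' n, goyB k₀ u v n * (starRingEnd ℂ) (v n)) = 0 := by
      have e1 : (∑' n, goyB k₀ u v n * (starRingEnd ℂ) (v n)) =
          (∑' n, tA k₀ u v n) + (∑' n, tB k₀ u v n) + (∑' n, tC k₀ u v n) +
            (∑' n, tD k₀ u v n) := by
        rw [tsum_congr hdecomp, Summable.tsum_add ((sA.add sB).add sC) sD,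
          Summable.tsum_add (sA.add sB) sC, Summable.tsum_add sA sB]
      have eA : (∑' n, tA k₀ u v n) = - ∑' n, tC k₀ u v n := by
        rw [Summable.tsum_eq_zero_add sA, hA0]
        simp only [hAC]
        rw [tsum_neg]
        ring
      have eD : (∑' n, tD k₀ u v n) = - ∑' n, tB k₀ u v n := by
        rw [Summable.tsum_eq_zero_add sD, hD0,
          Summable.tsum_eq_zero_add ((summable_nat_add_iff 1).mpr sD), hD1]
        simp only [hDB]
        rw [tsum_neg]
        ring
      rw [e1, eA, eD]
      ring
    rw [htsum]
    simp
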